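/- Let b : ℕ → ℝ be a real sequence which is not bounded from above and such that H(b) < +∞. Then H(b) ≥ 1. Moreover, setting p = H(b) − 1, the sequence b has a majorant s : ℕ → ℝ such that s(0) ≥ 0, the sequence Δ^p s is concave and not bounded from above, and limsup_{n→+∞} b(n)/s(n) lies in the interval [1/H(b), 1]. -/

import Mathlib

/-- The difference operator on real sequences: `(Δa)(0) = a(0)` and
`(Δa)(n) = a(n) − a(n−1)` for `n ≥ 1`. -/
def dSeq (a : ℕ → ℝ) : ℕ → ℝ := fun n =>
  match n with
  | 0 => a 0
  | n + 1 => a (n + 1) - a n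

/-- The index `H(a) ∈ ℕ ∪ {+∞}`: the infimum of the set of `m ∈ ℕ` for which the
sequence `(a(n)/n^m)_{n≥1}` is bounded from above. -/
noncomputable def Hindex (a : ℕ → ℝ) : ℕ∞ :=
  sInf {m : ℕ∞ | ∃ k : ℕ, m = (k : ℕ∞) ∧ ∃ M : ℝ, ∀ n : ℕ, 1 ≤ n → a n / (n : ℝ) ^ k ≤ M}


open Filter Finset




noncomputable def sumSeq (a : ℕ → ℝ) : ℕ → ℝ := fun n => ∑ k ∈ Finset.range (n+1), a k


lemma dSeq_sumSeq (a : ℕ → ℝ) : dSeq (sumSeq a) = a := by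
  funext n
  cases n with
  | zero => simp [dSeq, sumSeq]
  | succ n => simp [dSeq, sumSeq, Finset.sum_range_succ]

lemma dSeq_iter_sumSeq_iter (q : ℕ) (a : ℕ → ℝ) : dSeq^[q] (sumSeq^[q] a) = a := by
  induction q with
  | zero => rfl
  | succ q ih =>
    rw [Function.iterate_succ_apply' (f := sumSeq), Function.iterate_succ_apply (f := dSeq),
      dSeq_sumSeq, ih]

lemma hockey0 (q n : ℕ) : ∑ j ∈ Finset.range (n+1), (j+q).choose q = (n+q+1).choose (q+1) := by
  induction n with
  | zero => simp
  | succ n ih =>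
    rw [Finset.sum_range_succ, ih]
    have e1 : n+1+q = n+q+1 := by omega
    rw [e1]
    have h := Nat.choose_succ_succ' (n+q+1) q
    omega

lemma hockey1 (q n : ℕ) : ∑ j ∈ Finset.range (n+1), (j+q).choose (q+1) = (n+q+1).choose (q+2) := by
  induction n with
  | zero => simp [Nat.choose_succ_self]
  | succ n ih =>
    rw [Finset.sum_range_succ, ih]
    have e1 : n+1+q = n+q+1 := by omega
    rw [e1]
    have h := Nat.choose_succ_succ' (n+q+1) (q+1)
    have e3 : q+1+1 = q+2 := rfl
    rw [e3] at h
    omega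

lemma pow_le_descFactorial' (n : ℕ) : ∀ k m : ℕ, (∀ i < k, n ≤ m - i) → n^k ≤ m.descFactorial k := by
  intro k
  induction k with
  | zero => intro m _; simp
  | succ k ih =>
    intro m h
    rw [Nat.descFactorial_succ, pow_succ, Nat.mul_comm]
    exact Nat.mul_le_mul (h k (Nat.lt_succ_self k)) (ih m (fun i hi => h i (Nat.lt_succ_of_lt hi)))

lemma pow_le_descFactorial (n p : ℕ) : n^(p+1) ≤ (n+p).descFactorial (p+1) := by
  apply pow_le_descFactorial'
  intro i hi; omega




/-- combined upper-bound pack for iterated sums of a nonneg monotone sequence -/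
lemma sumSeq_iter_pack (t : ℕ → ℝ) (h0 : ∀ n, 0 ≤ t n) (hm : Monotone t) (q : ℕ) :
    (∀ n, 0 ≤ sumSeq^[q] t n) ∧ Monotone (sumSeq^[q] t) ∧
    (∀ n, t n ≤ sumSeq^[q] t n) ∧
    (∀ n, sumSeq^[q] t n ≤ ((n+q).choose q : ℝ) * t n) := by
  induction q with
  | zero =>
    refine ⟨h0, hm, fun n => le_refl _, fun n => ?_⟩
    simp
  | succ q ih =>
    obtain ⟨hu0, hum, hut, hub⟩ := ih
    set u := sumSeq^[q] t with hu
    have hsucc : sumSeq^[q+1] t = sumSeq u := by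
      rw [Function.iterate_succ_apply']
    rw [hsucc]
    have hs0 : ∀ n, 0 ≤ sumSeq u n := by
      intro n
      exact Finset.sum_nonneg fun j _ => hu0 j
    have hself : ∀ n, u n ≤ sumSeq u n := by
      intro n
      have : sumSeq u n = ∑ j ∈ Finset.range n, u j + u n := Finset.sum_range_succ u n
      rw [this]
      have : (0:ℝ) ≤ ∑ j ∈ Finset.range n, u j := Finset.sum_nonneg fun j _ => hu0 j
      linarith
    refine ⟨hs0, ?_, fun n => le_trans (hut n) (hself n), ?_⟩
    · apply monotone_nat_of_le_succ
      intro n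
      rw [show sumSeq u (n+1) = ∑ j ∈ Finset.range (n+1), u j + u (n+1) from Finset.sum_range_succ u (n+1)]
      have h2 := hu0 (n+1)
      have e : sumSeq u n = ∑ j ∈ Finset.range (n+1), u j := rfl
      rw [e]
      linarith
    · intro n
      have step1 : sumSeq u n ≤ ∑ j ∈ Finset.range (n+1), ((j+q).choose q : ℝ) * t n := by
        apply Finset.sum_le_sum
        intro j hj
        have hjn : j ≤ n := Nat.lt_succ_iff.mp (Finset.mem_range.mp hj)
        calc u j ≤ ((j+q).choose q : ℝ) * t j := hub j
          _ ≤ ((j+q).choose q : ℝ) * t n := by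
              apply mul_le_mul_of_nonneg_left (hm hjn) (by positivity)
      calc sumSeq u n ≤ _ := step1
        _ = ((∑ j ∈ Finset.range (n+1), (j+q).choose q : ℕ) : ℝ) * t n := by
            rw [Nat.cast_sum, Finset.sum_mul]
        _ = ((n+q+1).choose (q+1) : ℝ) * t n := by rw [hockey0]
        _ = ((n+(q+1)).choose (q+1) : ℝ) * t n := by ring_nf



/-- discrete concave chord inequality -/
lemma concave_chord (t : ℕ → ℝ) (h0 : 0 ≤ t 0)
    (hconc : ∀ n, t (n+2) - t (n+1) ≤ t (n+1) - t n) :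
    ∀ N : ℕ, ∀ j : ℕ, j ≤ N → (j : ℝ) * t N ≤ (N : ℝ) * t j := by
  have hd : Antitone (fun i => t (i+1) - t i) := by
    apply antitone_nat_of_succ_le
    intro i
    exact hconc i
  intro N j hj
  rcases Nat.eq_zero_or_pos j with rfl | hj1
  · simpa using mul_nonneg (Nat.cast_nonneg N) h0
  have hsum : ∀ m : ℕ, t m = t 0 + ∑ i ∈ Finset.range m, (t (i+1) - t i) := by
    intro m
    rw [Finset.sum_range_sub (f := t)]
    ring
  have hlow : (j : ℝ) * (t (j-1+1) - t (j-1)) ≤ ∑ i ∈ Finset.range j, (t (i+1) - t i) := by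
    have := Finset.card_nsmul_le_sum (Finset.range j) (fun i => t (i+1) - t i)
      (t (j-1+1) - t (j-1)) (fun i hi => hd (by
        have := Finset.mem_range.mp hi; omega))
    simpa [nsmul_eq_mul] using this
  have hhigh : ∑ i ∈ Finset.Ico j N, (t (i+1) - t i) ≤ ((N - j : ℕ) : ℝ) * (t (j-1+1) - t (j-1)) := by
    have := Finset.sum_le_card_nsmul (Finset.Ico j N) (fun i => t (i+1) - t i)
      (t (j-1+1) - t (j-1)) (fun i hi => hd (by
        have := (Finset.mem_Ico.mp hi).1; omega))
    simpa [nsmul_eq_mul, Nat.card_Ico] using this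
  have hsplit : ∑ i ∈ Finset.range N, (t (i+1) - t i)
      = ∑ i ∈ Finset.range j, (t (i+1) - t i) + ∑ i ∈ Finset.Ico j N, (t (i+1) - t i) := by
    rw [Finset.range_eq_Ico, ← Finset.sum_Ico_consecutive _ (Nat.zero_le j) hj]
    rw [← Finset.range_eq_Ico]
  have hcast : ((N - j : ℕ) : ℝ) = (N : ℝ) - (j : ℝ) := by
    rw [Nat.cast_sub hj]
  have hjN : (j : ℝ) ≤ (N : ℝ) := Nat.cast_le.mpr hj
  have hj0 : (0:ℝ) ≤ (j:ℝ) := Nat.cast_nonneg j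
  -- combine
  rw [hsum N, hsum j, hsplit]
  set S1 := ∑ i ∈ Finset.range j, (t (i+1) - t i)
  set S2 := ∑ i ∈ Finset.Ico j N, (t (i+1) - t i)
  set D := t (j-1+1) - t (j-1)
  rw [hcast] at hhigh
  -- goal: j * (t0 + (S1 + S2)) ≤ N * (t0 + S1)
  -- we know: j*D ≤ S1, S2 ≤ (N-j)*D, j ≤ N, 0 ≤ t0
  nlinarith [mul_le_mul_of_nonneg_left hhigh hj0, mul_le_mul_of_nonneg_right hlow (sub_nonneg.mpr hjN)]

/-- lower bound for iterated sums using chord comparison -/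
lemma sumSeq_iter_ge (t : ℕ → ℝ) (N : ℕ)
    (hc : ∀ j : ℕ, j ≤ N → (j : ℝ) * t N ≤ (N : ℝ) * t j) :
    ∀ q : ℕ, ∀ n : ℕ, n ≤ N → ((n+q).choose (q+1) : ℝ) * t N ≤ (N : ℝ) * sumSeq^[q] t n := by
  intro q
  induction q with
  | zero =>
    intro n hn
    simpa using hc n hn
  | succ q ih =>
    intro n hn
    have hsucc : sumSeq^[q+1] t = sumSeq (sumSeq^[q] t) := Function.iterate_succ_apply' _ _ _
    rw [hsucc]
    have e : (N : ℝ) * sumSeq (sumSeq^[q] t) n = ∑ j ∈ Finset.range (n+1), (N:ℝ) * sumSeq^[q] t j := by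
      rw [← Finset.mul_sum]; rfl
    rw [e]
    calc ((n+(q+1)).choose (q+2) : ℝ) * t N
        = ((∑ j ∈ Finset.range (n+1), (j+q).choose (q+1) : ℕ) : ℝ) * t N := by
          rw [hockey1]; ring_nf
      _ = ∑ j ∈ Finset.range (n+1), ((j+q).choose (q+1) : ℝ) * t N := by
          rw [Nat.cast_sum, Finset.sum_mul]
      _ ≤ _ := by
          apply Finset.sum_le_sum
          intro j hj
          exact ih j (le_trans (Nat.lt_succ_iff.mp (Finset.mem_range.mp hj)) hn)


noncomputable def concMaj (c : ℕ → ℝ) : ℕ → ℝ := fun n =>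
  sInf {y : ℝ | ∃ α β : ℝ, (∀ k : ℕ, c k ≤ α * k + β) ∧ y = α * n + β}

section
variable {c : ℕ → ℝ}

lemma concMaj_set_nonempty (hmaj : ∃ α β : ℝ, ∀ k : ℕ, c k ≤ α * k + β) (n : ℕ) :
    {y : ℝ | ∃ α β : ℝ, (∀ k : ℕ, c k ≤ α * k + β) ∧ y = α * n + β}.Nonempty := by
  obtain ⟨α, β, h⟩ := hmaj
  exact ⟨α * n + β, α, β, h, rfl⟩

lemma concMaj_bddBelow (n : ℕ) :
    BddBelow {y : ℝ | ∃ α β : ℝ, (∀ k : ℕ, c k ≤ α * k + β) ∧ y = α * n + β} := by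
  refine ⟨c n, ?_⟩
  rintro y ⟨α, β, h, rfl⟩
  exact h n

lemma le_concMaj (hmaj : ∃ α β : ℝ, ∀ k : ℕ, c k ≤ α * k + β) (n : ℕ) :
    c n ≤ concMaj c n := by
  apply le_csInf (concMaj_set_nonempty hmaj n)
  rintro y ⟨α, β, h, rfl⟩
  exact h n

lemma concMaj_le {α β : ℝ} (h : ∀ k : ℕ, c k ≤ α * k + β) (n : ℕ) :
    concMaj c n ≤ α * n + β :=
  csInf_le (concMaj_bddBelow n) ⟨α, β, h, rfl⟩

lemma majorant_slope_pos (hub : ∀ M : ℝ, ∃ k : ℕ, M < c k) {α β : ℝ}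
    (h : ∀ k : ℕ, c k ≤ α * k + β) : 0 < α := by
  by_contra hα
  push_neg at hα
  obtain ⟨k, hk⟩ := hub β
  have : α * k ≤ 0 := mul_nonpos_of_nonpos_of_nonneg hα (Nat.cast_nonneg k)
  have := h k
  linarith

lemma concMaj_mono (hmaj : ∃ α β : ℝ, ∀ k : ℕ, c k ≤ α * k + β)
    (hub : ∀ M : ℝ, ∃ k : ℕ, M < c k) : Monotone (concMaj c) := by
  apply monotone_nat_of_le_succ
  intro n
  apply le_csInf (concMaj_set_nonempty hmaj (n+1))
  rintro y ⟨α, β, h, rfl⟩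
  have hα := majorant_slope_pos hub h
  calc concMaj c n ≤ α * n + β := concMaj_le h n
    _ ≤ α * (n+1 : ℕ) + β := by
        have : ((n:ℝ)) ≤ ((n+1 : ℕ):ℝ) := by exact_mod_cast Nat.le_succ n
        nlinarith

lemma concMaj_concave (hmaj : ∃ α β : ℝ, ∀ k : ℕ, c k ≤ α * k + β) (n : ℕ) :
    concMaj c n + concMaj c (n+2) ≤ 2 * concMaj c (n+1) := by
  have h2 : concMaj c n + concMaj c (n+2) ≤ 2 * concMaj c (n+1) := by
    have : (concMaj c n + concMaj c (n+2)) / 2 ≤ concMaj c (n+1) := by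
      apply le_csInf (concMaj_set_nonempty hmaj (n+1))
      rintro y ⟨α, β, h, rfl⟩
      have h1 : concMaj c n ≤ α * n + β := concMaj_le h n
      have h3 : concMaj c (n+2) ≤ α * (n+2:ℕ) + β := concMaj_le h (n+2)
      push_cast at h3 ⊢
      linarith
    linarith
  exact h2

lemma concMaj_touch (hmaj : ∃ α β : ℝ, ∀ k : ℕ, c k ≤ α * k + β)
    (hub : ∀ M : ℝ, ∃ k : ℕ, M < c k) (hc0 : ∀ n, 0 ≤ c n)
    {ε : ℝ} (hε : 0 < ε) (B : ℝ) :
    ∃ n : ℕ, B ≤ c n ∧ concMaj c n ≤ (1+ε) * c n := by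
  by_contra hcon
  push_neg at hcon
  set B0 := max B 0 with hB0
  have hB00 : 0 ≤ B0 := le_max_right _ _
  have hcb : ∀ n, c n ≤ B0 + concMaj c n / (1+ε) := by
    intro n
    rcases le_or_gt B (c n) with h | h
    · have h2 := hcon n h
      have h3 : c n ≤ concMaj c n / (1+ε) := by
        rw [le_div_iff₀ (by linarith)]
        linarith [h2]
      linarith
    · have : c n ≤ B0 := le_trans h.le (le_max_left _ _)
      have h4 : 0 ≤ concMaj c n / (1+ε) := by
        apply div_nonneg _ (by linarith)
        exact le_trans (hc0 n) (le_concMaj hmaj n)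
      linarith
  obtain ⟨n₁, hn₁⟩ := hub ((B0 + 1) * (1+ε) / ε)
  obtain ⟨y, hy, hylt⟩ := exists_lt_of_csInf_lt (concMaj_set_nonempty hmaj n₁)
    (lt_add_one (concMaj c n₁))
  obtain ⟨α₁, β₁, hmaj₁, rfl⟩ := hy
  have hmaj2 : ∀ k : ℕ, c k ≤ (α₁/(1+ε)) * k + (β₁/(1+ε) + B0) := by
    intro k
    have h1 : concMaj c k ≤ α₁ * k + β₁ := concMaj_le hmaj₁ k
    have h2 := hcb k
    have h3 : concMaj c k / (1+ε) ≤ (α₁ * k + β₁) / (1+ε) :=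
      div_le_div_of_nonneg_right h1 (by linarith) |>.trans_eq rfl
    calc c k ≤ B0 + concMaj c k / (1+ε) := h2
      _ ≤ B0 + (α₁ * k + β₁) / (1+ε) := by linarith
      _ = (α₁/(1+ε)) * k + (β₁/(1+ε) + B0) := by ring
  have hT1 : concMaj c n₁ ≤ (α₁/(1+ε)) * n₁ + (β₁/(1+ε) + B0) := concMaj_le hmaj2 n₁
  have hT2 : (α₁/(1+ε)) * n₁ + (β₁/(1+ε) + B0) = (α₁ * n₁ + β₁)/(1+ε) + B0 := by ring
  have hT3 : concMaj c n₁ ≤ (concMaj c n₁ + 1)/(1+ε) + B0 := by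
    rw [hT2] at hT1
    have : (α₁ * n₁ + β₁)/(1+ε) ≤ (concMaj c n₁ + 1)/(1+ε) :=
      div_le_div_of_nonneg_right hylt.le (by linarith)
    linarith
  have hT4 : (B0 + 1) * (1+ε) / ε < concMaj c n₁ :=
    lt_of_lt_of_le hn₁ (le_concMaj hmaj n₁)
  have hε1 : (0:ℝ) < 1 + ε := by linarith
  have e3 : concMaj c n₁ * (1+ε) ≤ (concMaj c n₁ + 1) + B0 * (1+ε) := by
    have h5 := mul_le_mul_of_nonneg_right hT3 (le_of_lt hε1)
    rw [add_mul, div_mul_cancel₀ _ (ne_of_gt hε1)] at h5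
    linarith
  have e4 : (B0+1)*(1+ε) < concMaj c n₁ * ε := by
    have h6 := mul_lt_mul_of_pos_right hT4 hε
    rw [div_mul_cancel₀ _ (ne_of_gt hε)] at h6
    linarith
  nlinarith
end


noncomputable def cSeq (b : ℕ → ℝ) (p : ℕ) (A : ℝ) : ℕ → ℝ
  | 0 => max (b 0) 0
  | n+1 => max (cSeq b p A n) (A * b (n+1) / ((n+1 : ℕ) : ℝ)^p)

section
variable {b : ℕ → ℝ} {p : ℕ} {A : ℝ}

lemma cSeq_succ (b : ℕ → ℝ) (p : ℕ) (A : ℝ) (k : ℕ) :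
    cSeq b p A (k+1) = max (cSeq b p A k) (A * b (k+1) / ((k+1 : ℕ) : ℝ)^p) := rfl

lemma cSeq_mono : Monotone (cSeq b p A) := by
  apply monotone_nat_of_le_succ
  intro n
  exact le_max_left _ _

lemma cSeq_nonneg (n : ℕ) : 0 ≤ cSeq b p A n :=
  le_trans (le_max_right _ _) (cSeq_mono (Nat.zero_le n))

lemma cSeq_ge_b0 : b 0 ≤ cSeq b p A 0 := le_max_left _ _

lemma cSeq_ge (n : ℕ) (hn : 1 ≤ n) : A * b n / (n : ℝ)^p ≤ cSeq b p A n := by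
  cases n with
  | zero => omega
  | succ k => exact le_max_right _ _

lemma cSeq_affine {M : ℝ} (hM : 0 ≤ M) (hA : 0 ≤ A)
    (hMb : ∀ n : ℕ, 1 ≤ n → b n ≤ M * (n : ℝ)^(p+1)) (n : ℕ) :
    cSeq b p A n ≤ A * M * n + cSeq b p A 0 := by
  induction n with
  | zero => simp
  | succ n ih =>
    show max _ _ ≤ _
    apply max_le
    · have : (n:ℝ) ≤ ((n+1:ℕ):ℝ) := by exact_mod_cast Nat.le_succ n
      nlinarith [cSeq_nonneg (b := b) (p := p) (A := A) 0, mul_nonneg hA hM]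
    · have hn1 : (0:ℝ) < ((n+1:ℕ):ℝ) := by positivity
      have hpow : (0:ℝ) < ((n+1:ℕ):ℝ)^p := by positivity
      have hb := hMb (n+1) (Nat.le_add_left 1 n)
      have h1 : A * b (n+1) ≤ A * (M * ((n+1:ℕ):ℝ)^(p+1)) :=
        mul_le_mul_of_nonneg_left hb hA
      have h2 : A * b (n+1) / ((n+1:ℕ):ℝ)^p ≤ A * (M * ((n+1:ℕ):ℝ)^(p+1)) / ((n+1:ℕ):ℝ)^p :=
        div_le_div_of_nonneg_right h1 hpow.le
      have h3 : A * (M * ((n+1:ℕ):ℝ)^(p+1)) / ((n+1:ℕ):ℝ)^p = A * M * ((n+1:ℕ):ℝ) := by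
        rw [pow_succ]
        field_simp
      rw [h3] at h2
      have := cSeq_nonneg (b := b) (p := p) (A := A) 0
      linarith

lemma cSeq_unbounded (hA : 0 < A)
    (hP : ∀ C : ℝ, ∃ n : ℕ, 1 ≤ n ∧ C < b n / (n:ℝ)^p) (C : ℝ) :
    ∃ n : ℕ, C < cSeq b p A n := by
  obtain ⟨n, hn1, hn⟩ := hP (C / A)
  refine ⟨n, ?_⟩
  have h1 : C < A * (b n / (n:ℝ)^p) := by
    rw [← div_lt_iff₀' hA]
    exact hn
  calc C < A * (b n / (n:ℝ)^p) := h1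
    _ = A * b n / (n:ℝ)^p := by ring
    _ ≤ cSeq b p A n := cSeq_ge n hn1
end

lemma ratio_pow (p : ℕ) {γ : ℝ} (hγ : γ < 1) :
    ∃ n₁ : ℕ, 1 ≤ n₁ ∧ ∀ n : ℕ, n₁ ≤ n → γ * ((n:ℝ)+p)^p ≤ (n:ℝ)^p := by
  refine ⟨max 1 (⌈(p:ℝ)^2/(1-γ)⌉₊ + 1), le_max_left _ _, ?_⟩
  intro n hn
  have hn1 : 1 ≤ n := le_trans (le_max_left _ _) hn
  have hnp : (0:ℝ) < (n:ℝ) + p := by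
    have : (1:ℝ) ≤ (n:ℝ) := by exact_mod_cast hn1
    positivity
  set x : ℝ := (p:ℝ)/((n:ℝ)+p) with hx
  have hx0 : 0 ≤ x := by positivity
  have hx1 : x ≤ 1 := by
    rw [hx, div_le_one hnp]
    have : (0:ℝ) ≤ (n:ℝ) := Nat.cast_nonneg n
    linarith
  have hbern : 1 + (p:ℝ) * (-x) ≤ (1 + (-x))^p := by
    apply one_add_mul_le_pow
    linarith
  have hceil : (p:ℝ)^2/(1-γ) ≤ (n:ℝ) := by
    have h1 : (⌈(p:ℝ)^2/(1-γ)⌉₊ : ℝ) ≤ (n:ℝ) := by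
      have : ⌈(p:ℝ)^2/(1-γ)⌉₊ ≤ n := le_trans (Nat.le_succ _) (le_trans (le_max_right _ _) hn)
      exact_mod_cast this
    exact le_trans (Nat.le_ceil _) h1
  have hpx : (p:ℝ) * x ≤ 1 - γ := by
    have h1 : (p:ℝ)^2 ≤ (1-γ) * (n:ℝ) := by
      rw [div_le_iff₀ (by linarith : (0:ℝ) < 1-γ)] at hceil
      linarith
    have h2 : (p:ℝ) * x * ((n:ℝ)+p) = (p:ℝ)^2 := by
      rw [hx]
      field_simp
    have h3 : (1-γ) * (n:ℝ) ≤ (1-γ) * ((n:ℝ)+p) := by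
      have : (0:ℝ) ≤ (p:ℝ) := Nat.cast_nonneg p
      nlinarith
    nlinarith [mul_nonneg (Nat.cast_nonneg p) hx0]
  have hkey : γ ≤ (1-x)^p := by
    have : 1 + (p:ℝ)*(-x) = 1 - (p:ℝ)*x := by ring
    calc γ ≤ 1 - (p:ℝ)*x := by linarith
      _ = 1 + (p:ℝ)*(-x) := by ring
      _ ≤ (1 + (-x))^p := hbern
      _ = (1-x)^p := by ring_nf
  have hfinal : (1-x) * ((n:ℝ)+p) = (n:ℝ) := by
    rw [hx]
    field_simp
    ring
  calc γ * ((n:ℝ)+p)^p ≤ (1-x)^p * ((n:ℝ)+p)^p := by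
        apply mul_le_mul_of_nonneg_right hkey (by positivity)
    _ = ((1-x)*((n:ℝ)+p))^p := by rw [mul_pow]
    _ = (n:ℝ)^p := by rw [hfinal]


/-- Theorem 5.3: if `b` is not bounded from above and `H(b) < +∞`, then `H(b) ≥ 1`, and,
with `p = H(b) − 1`, `b` has a majorant `s` such that `s(0) ≥ 0`, `Δ^p s` is concave and
not bounded from above, and `limsup_{n→∞} b(n)/s(n) ∈ [1/H(b), 1]`. -/
theorem stmt13 (b : ℕ → ℝ)
    (hub : ¬∃ M : ℝ, ∀ n, b n ≤ M)
    (hH : Hindex b ≠ ⊤) :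
    1 ≤ Hindex b ∧
    ∃ s : ℕ → ℝ, 0 ≤ s 0 ∧ (∀ n, b n ≤ s n) ∧
      (Antitone fun n =>
        dSeq^[(Hindex b).toNat - 1] s (n + 1) - dSeq^[(Hindex b).toNat - 1] s n) ∧
      (¬∃ M : ℝ, ∀ n, dSeq^[(Hindex b).toNat - 1] s n ≤ M) ∧
      Filter.limsup (fun n : ℕ => ((b n / s n : ℝ) : EReal)) Filter.atTop ∈
        Set.Icc (((1 / ((Hindex b).toNat : ℝ) : ℝ) : EReal)) (1 : EReal) := by

  classical
  -- the boundedness predicate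
  have hex : ∃ k : ℕ, ∃ M : ℝ, ∀ n : ℕ, 1 ≤ n → b n / (n : ℝ) ^ k ≤ M := by
    by_contra h
    push_neg at h
    apply hH
    have hempty : {m : ℕ∞ | ∃ k : ℕ, m = (k : ℕ∞) ∧ ∃ M : ℝ, ∀ n : ℕ, 1 ≤ n → b n / (n : ℝ) ^ k ≤ M} = ∅ := by
      ext x
      simp only [Set.mem_setOf_eq, Set.mem_empty_iff_false, iff_false]
      rintro ⟨k, rfl, M, hM⟩
      obtain ⟨n, hn1, hn2⟩ := h k M
      exact absurd (hM n hn1) (not_le.mpr hn2)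
    unfold Hindex
    rw [hempty, sInf_empty]
  set k₀ := Nat.find hex with hk₀def
  have hk₀ : ∃ M : ℝ, ∀ n : ℕ, 1 ≤ n → b n / (n : ℝ) ^ k₀ ≤ M := Nat.find_spec hex
  have hk₀1 : 1 ≤ k₀ := by
    by_contra h
    push_neg at h
    interval_cases k₀
    · obtain ⟨M, hM⟩ := hk₀
      apply hub
      refine ⟨max M (b 0), fun n => ?_⟩
      cases n with
      | zero => exact le_max_right _ _
      | succ n =>
        have := hM (n+1) (Nat.le_add_left 1 n)
        simp only [pow_zero, div_one] at this
        exact le_trans this (le_max_left _ _)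
  have hHk : Hindex b = (k₀ : ℕ∞) := by
    apply le_antisymm
    · exact sInf_le ⟨k₀, rfl, hk₀⟩
    · apply le_sInf
      rintro x ⟨k, rfl, M, hM⟩
      have : k₀ ≤ k := Nat.find_min' hex ⟨M, hM⟩
      exact_mod_cast this
  have htoNat : (Hindex b).toNat = k₀ := by rw [hHk]; simp
  set p := k₀ - 1 with hpdef
  have hpk : k₀ = p + 1 := by omega
  -- the upper bound M
  obtain ⟨M₀, hM₀⟩ := hk₀
  set M := max M₀ 1 with hMdef
  have hM1 : (1:ℝ) ≤ M := le_max_right _ _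
  have hM0 : (0:ℝ) ≤ M := by linarith
  have hMb : ∀ n : ℕ, 1 ≤ n → b n ≤ M * (n : ℝ)^(p+1) := by
    intro n hn
    have h1 : b n / (n:ℝ)^k₀ ≤ M := le_trans (hM₀ n hn) (le_max_left _ _)
    have hnp : (0:ℝ) < (n:ℝ)^k₀ := by
      have : (1:ℝ) ≤ (n:ℝ) := by exact_mod_cast hn
      positivity
    rw [div_le_iff₀ hnp] at h1
    rw [← hpk]
    linarith
  -- b n / n^p is unbounded
  have hPp : ∀ C : ℝ, ∃ n : ℕ, 1 ≤ n ∧ C < b n / (n:ℝ)^p := by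
    intro C
    have hnot : ¬ ∃ M : ℝ, ∀ n : ℕ, 1 ≤ n → b n / (n : ℝ) ^ p ≤ M := Nat.find_min hex (by omega)
    push_neg at hnot
    obtain ⟨n, hn1, hn2⟩ := hnot C
    exact ⟨n, hn1, hn2⟩
  -- constants
  set A : ℝ := ((Nat.factorial (p+1) : ℕ) : ℝ) with hAdef
  have hA0 : (0:ℝ) < A := by
    rw [hAdef]
    exact_mod_cast Nat.factorial_pos (p+1)
  -- the modified sequence c
  set c := cSeq b p A with hcdef
  have hcub : ∀ C : ℝ, ∃ n : ℕ, C < c n := cSeq_unbounded hA0 hPp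
  have hc0 : ∀ n, 0 ≤ c n := fun n => cSeq_nonneg n
  have hmaj : ∃ α β : ℝ, ∀ k : ℕ, c k ≤ α * k + β :=
    ⟨A * M, c 0, fun k => cSeq_affine hM0 hA0.le hMb k⟩
  -- the concave majorant t
  set t := concMaj c with htdef
  have htc : ∀ n, c n ≤ t n := le_concMaj hmaj
  have htm : Monotone t := concMaj_mono hmaj hcub
  have ht0 : ∀ n, 0 ≤ t n := fun n => le_trans (hc0 n) (htc n)
  have htcc : ∀ n, t (n+2) - t (n+1) ≤ t (n+1) - t n := by
    intro n
    have := concMaj_concave hmaj n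
    rw [← htdef] at this
    linarith
  -- the majorant s
  set s := sumSeq^[p] t with hsdef
  obtain ⟨hs0, hsm, hst, hsub⟩ := sumSeq_iter_pack t ht0 htm p
  rw [← hsdef] at hs0 hsm hst hsub
  have hds : dSeq^[p] s = t := by rw [hsdef]; exact dSeq_iter_sumSeq_iter p t
  have hch := concave_chord t (ht0 0) htcc
  -- s is a majorant of b
  have hmajb : ∀ n, b n ≤ s n := by
    intro n
    cases n with
    | zero =>
      calc b 0 ≤ c 0 := cSeq_ge_b0
        _ ≤ t 0 := htc 0
        _ ≤ s 0 := hst 0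
    | succ m =>
      set n := m + 1 with hndef
      have hn1 : 1 ≤ n := Nat.le_add_left 1 m
      have hnR : (1:ℝ) ≤ (n:ℝ) := by exact_mod_cast hn1
      have hnR0 : (0:ℝ) < (n:ℝ) := by linarith
      have hlow : (((n+p).choose (p+1) : ℕ) : ℝ) * t n ≤ (n:ℝ) * s n := by
        have := sumSeq_iter_ge t n (fun j hj => hch n j hj) p n le_rfl
        rw [← hsdef] at this
        exact this
      have h2 : A * ((((n+p).choose (p+1) : ℕ) : ℝ) * t n) = (((n+p).descFactorial (p+1) : ℕ) : ℝ) * t n := by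
        rw [Nat.descFactorial_eq_factorial_mul_choose]
        rw [hAdef]
        push_cast
        ring
      have h3 : (n:ℝ)^(p+1) * t n ≤ (((n+p).descFactorial (p+1) : ℕ) : ℝ) * t n := by
        apply mul_le_mul_of_nonneg_right _ (ht0 n)
        have := pow_le_descFactorial n p
        calc (n:ℝ)^(p+1) = ((n^(p+1) : ℕ) : ℝ) := by push_cast; ring
          _ ≤ _ := by exact_mod_cast this
      have h4 : (n:ℝ)^(p+1) * c n ≤ (n:ℝ)^(p+1) * t n :=
        mul_le_mul_of_nonneg_left (htc n) (by positivity)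
      have h5 : (n:ℝ)^(p+1) * (A * b n / (n:ℝ)^p) ≤ (n:ℝ)^(p+1) * c n :=
        mul_le_mul_of_nonneg_left (cSeq_ge n hn1) (by positivity)
      have h6 : (n:ℝ)^(p+1) * (A * b n / (n:ℝ)^p) = A * ((n:ℝ) * b n) := by
        rw [pow_succ]
        field_simp
      have h7 : A * ((n:ℝ) * b n) ≤ A * ((n:ℝ) * s n) := by
        calc A * ((n:ℝ) * b n) = (n:ℝ)^(p+1) * (A * b n / (n:ℝ)^p) := by rw [h6]
          _ ≤ (n:ℝ)^(p+1) * c n := h5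
          _ ≤ (n:ℝ)^(p+1) * t n := h4
          _ ≤ (((n+p).descFactorial (p+1) : ℕ) : ℝ) * t n := h3
          _ = A * ((((n+p).choose (p+1) : ℕ) : ℝ) * t n) := h2.symm
          _ ≤ A * ((n:ℝ) * s n) := mul_le_mul_of_nonneg_left hlow hA0.le
      have h8 : (n:ℝ) * b n ≤ (n:ℝ) * s n := le_of_mul_le_mul_left h7 hA0
      exact le_of_mul_le_mul_left h8 hnR0
  -- positivity of s eventually
  obtain ⟨N₀, hN₀⟩ := hcub 0
  have hspos : ∀ n, N₀ ≤ n → 0 < s n := by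
    intro n hn
    calc (0:ℝ) < c N₀ := hN₀
      _ ≤ c n := cSeq_mono hn
      _ ≤ t n := htc n
      _ ≤ s n := hst n
  -- THE KEY frequently lemma
  have hfreq : ∀ r : ℝ, r < 1 / (k₀ : ℝ) → ∀ N : ℕ, ∃ n, N ≤ n ∧ r ≤ b n / s n := by
    intro r hr N
    have hk₀R : (0:ℝ) < (k₀ : ℝ) := by exact_mod_cast hk₀1
    set r' := max r (1 / (2 * (k₀:ℝ))) with hr'def
    have hr'0 : 0 < r' := lt_of_lt_of_le (by positivity) (le_max_right _ _)
    have hr'lt : r' < 1 / (k₀:ℝ) := by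
      apply max_lt hr
      rw [div_lt_div_iff₀ (by positivity) hk₀R]
      nlinarith
    suffices h : ∃ n, N ≤ n ∧ r' ≤ b n / s n by
      obtain ⟨n, hn1, hn2⟩ := h
      exact ⟨n, hn1, le_trans (le_max_left _ _) hn2⟩
    have hrk : r' * (k₀:ℝ) < 1 := (lt_div_iff₀ hk₀R).mp hr'lt
    have hrk0 : 0 < r' * (k₀:ℝ) := mul_pos hr'0 hk₀R
    set γ := (1 + r' * (k₀:ℝ)) / 2 with hγdef
    have hγ1 : γ < 1 := by rw [hγdef]; linarith
    have hγgt : r' * (k₀:ℝ) < γ := by rw [hγdef]; linarith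
    have hγ0 : 0 < γ := by rw [hγdef]; linarith
    obtain ⟨n₁, hn₁1, hn₁⟩ := ratio_pow p hγ1
    set ε := γ / (r' * (k₀:ℝ)) - 1 with hεdef
    have hε : 0 < ε := by
      have h1 : 1 < γ / (r' * (k₀:ℝ)) := (one_lt_div hrk0).mpr hγgt
      rw [hεdef]
      linarith
    have h1ε : 1 + ε = γ / (r' * (k₀:ℝ)) := by rw [hεdef]; ring
    set Q := max N n₁ with hQdef
    set B := A * M * (Q:ℝ) + c 0 + 1 with hBdef
    have hAMQ : 0 ≤ A * M * (Q:ℝ) := mul_nonneg (mul_nonneg hA0.le hM0) (Nat.cast_nonneg Q)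
    obtain ⟨n, hBn, htn⟩ := concMaj_touch hmaj hcub hc0 hε B
    rw [← htdef] at htn
    have hexn : ∃ k, c n ≤ c k := ⟨n, le_rfl⟩
    set n' := Nat.find hexn with hn'def
    have hn'spec : c n ≤ c n' := Nat.find_spec hexn
    have hn'le : n' ≤ n := Nat.find_min' hexn le_rfl
    have hcc : c n' = c n := le_antisymm (cSeq_mono hn'le) hn'spec
    have hBc : B ≤ c n' := by rw [hcc]; exact hBn
    have hn'1 : 1 ≤ n' := by
      rcases Nat.eq_zero_or_pos n' with h0 | h
      · exfalso
        have h1 : B ≤ c 0 := h0 ▸ hBc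
        rw [hBdef] at h1
        linarith
      · exact h
    have hjump : c n' = A * b n' / ((n' : ℕ) : ℝ)^p := by
      obtain ⟨k, hk⟩ : ∃ k, n' = k + 1 := ⟨n' - 1, by omega⟩
      have hmin : ¬ c n ≤ c k := Nat.find_min hexn (by omega)
      push_neg at hmin
      have hgt : c k < c n' := lt_of_lt_of_le hmin hn'spec
      have hceq : c (k+1) = max (c k) (A * b (k+1) / ((k+1:ℕ):ℝ)^p) := by
        rw [hcdef]; exact cSeq_succ b p A k
      rw [hk] at hgt ⊢
      rw [hceq] at hgt ⊢
      rcases max_cases (c k) (A * b (k+1) / ((k+1:ℕ):ℝ)^p) with ⟨he, _⟩ | ⟨he, _⟩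
      · rw [he] at hgt; exact absurd hgt (lt_irrefl _)
      · rw [he]
    have hn'Q : Q < n' := by
      have haff : c n' ≤ A * M * (n':ℝ) + c 0 := cSeq_affine hM0 hA0.le hMb n'
      by_contra hcon
      push_neg at hcon
      have hle : (n':ℝ) ≤ (Q:ℝ) := by exact_mod_cast hcon
      have hAM : 0 < A * M := mul_pos hA0 (lt_of_lt_of_le one_pos hM1)
      have h1 : A * M * (n':ℝ) ≤ A * M * (Q:ℝ) := mul_le_mul_of_nonneg_left hle hAM.le
      have h2 := hBc
      rw [hBdef] at h2
      linarith
    have hn'N : N ≤ n' := le_trans (le_max_left _ _) hn'Q.le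
    have hn'n₁ : n₁ ≤ n' := le_trans (le_max_right _ _) hn'Q.le
    have hcpos : 0 < c n' := by
      have h2 := hBc
      rw [hBdef] at h2
      linarith [hc0 0, hAMQ]
    have ht' : t n' ≤ (1+ε) * c n' := by
      calc t n' ≤ t n := htm hn'le
        _ ≤ (1+ε) * c n := htn
        _ = (1+ε) * c n' := by rw [hcc]
    have hs'pos : 0 < s n' := lt_of_lt_of_le hcpos (le_trans (htc n') (hst n'))
    have hn'R : (0:ℝ) < (n':ℝ) := by
      have h1 : (1:ℝ) ≤ (n':ℝ) := by exact_mod_cast hn'1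
      linarith
    have hpne : ((n':ℝ))^p ≠ 0 := ne_of_gt (pow_pos hn'R p)
    set Ch := (((n'+p).choose p : ℕ) : ℝ) with hChdef
    have hCh0 : (0:ℝ) ≤ Ch := Nat.cast_nonneg _
    have hdesc : ((p.factorial : ℕ):ℝ) * Ch ≤ ((n':ℝ) + (p:ℝ))^p := by
      have h1 : p.factorial * (n'+p).choose p = (n'+p).descFactorial p :=
        (Nat.descFactorial_eq_factorial_mul_choose _ _).symm
      have h2 : p.factorial * (n'+p).choose p ≤ (n'+p)^p := by
        rw [h1]; exact Nat.descFactorial_le_pow _ _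
      have h3 : ((p.factorial * (n'+p).choose p : ℕ):ℝ) ≤ (((n'+p)^p : ℕ):ℝ) := by
        exact_mod_cast h2
      push_cast at h3
      rw [hChdef]
      push_cast
      linarith
    have hkey : γ / (k₀:ℝ) * Ch ≤ (n':ℝ)^p / A := by
      rw [div_mul_eq_mul_div, div_le_div_iff₀ hk₀R hA0]
      have hA' : A = ((k₀:ℝ)) * ((p.factorial : ℕ):ℝ) := by
        rw [hAdef, hpk]
        push_cast [Nat.factorial_succ]
        ring
      have hmain : γ * (((p.factorial:ℕ):ℝ) * Ch) ≤ (n':ℝ)^p := by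
        calc γ * (((p.factorial:ℕ):ℝ) * Ch) ≤ γ * ((n':ℝ)+(p:ℝ))^p :=
              mul_le_mul_of_nonneg_left hdesc hγ0.le
          _ ≤ (n':ℝ)^p := hn₁ n' hn'n₁
      rw [hA']
      calc γ * Ch * ((k₀:ℝ) * ((p.factorial:ℕ):ℝ))
          = γ * (((p.factorial:ℕ):ℝ) * Ch) * (k₀:ℝ) := by ring
        _ ≤ (n':ℝ)^p * (k₀:ℝ) := mul_le_mul_of_nonneg_right hmain hk₀R.le
    have hb' : A * b n' = c n' * (n':ℝ)^p := by
      rw [hjump]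
      rw [div_mul_cancel₀ _ hpne]
    have hre : r' * (1+ε) = γ / (k₀:ℝ) := by
      rw [h1ε]
      field_simp
    refine ⟨n', hn'N, ?_⟩
    rw [le_div_iff₀ hs'pos]
    calc r' * s n' ≤ r' * (Ch * t n') := mul_le_mul_of_nonneg_left (hsub n') hr'0.le
      _ ≤ r' * (Ch * ((1+ε) * c n')) := by
          apply mul_le_mul_of_nonneg_left _ hr'0.le
          exact mul_le_mul_of_nonneg_left ht' hCh0
      _ = (r' * (1+ε)) * Ch * c n' := by ring
      _ = (γ / (k₀:ℝ)) * Ch * c n' := by rw [hre]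
      _ ≤ ((n':ℝ)^p / A) * c n' := mul_le_mul_of_nonneg_right hkey hcpos.le
      _ = b n' := by
          have he : ((n':ℝ)^p / A) * c n' = (A * b n') / A := by rw [hb']; ring
          rw [he, mul_div_cancel_left₀ _ (ne_of_gt hA0)]
  constructor
  · rw [hHk]
    exact_mod_cast hk₀1
  refine ⟨s, le_trans (le_trans (hc0 0) (htc 0)) (hst 0), hmajb, ?_, ?_, ?_⟩
  · simp only [htoNat, ← hpdef, hds]
    apply antitone_nat_of_succ_le
    intro n
    have := htcc n
    show t (n+1+1) - t (n+1) ≤ t (n+1) - t n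
    have e : n+1+1 = n+2 := rfl
    rw [e]
    linarith
  · simp only [htoNat, ← hpdef, hds]
    rintro ⟨M', hM'⟩
    obtain ⟨n, hn⟩ := hcub M'
    exact absurd (hM' n) (not_le.mpr (lt_of_lt_of_le hn (htc n)))
  · simp only [htoNat]
    rw [Set.mem_Icc]
    constructor
    · -- lower bound on limsup
      apply le_of_forall_lt
      intro x hx
      obtain ⟨r, hxr, hr⟩ := EReal.exists_between_coe_real hx
      have hrr : r < 1 / (k₀ : ℝ) := by exact_mod_cast hr
      have hf : ∃ᶠ n in Filter.atTop, (r : EReal) ≤ ((b n / s n : ℝ) : EReal) := by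
        rw [Filter.frequently_atTop]
        intro N
        obtain ⟨n, hn1, hn2⟩ := hfreq r hrr N
        exact ⟨n, hn1, by exact_mod_cast hn2⟩
      exact lt_of_lt_of_le hxr (Filter.le_limsup_of_frequently_le hf)
    · -- upper bound on limsup
      have hev : ∀ᶠ n in Filter.atTop, ((b n / s n : ℝ) : EReal) ≤ (1 : EReal) := by
        filter_upwards [Filter.eventually_ge_atTop N₀] with n hn
        have h1 : b n / s n ≤ 1 := div_le_one_of_le₀ (hmajb n) (hspos n hn).le
        exact_mod_cast h1
      exact Filter.limsup_le_of_le (by isBoundedDefault) hev
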